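/- Let C be a triangulated category carrying both a weight structure w and a t-structure t, and suppose they are left adjacent, i.e., C_{w≤0} ⊥ C_{t≥1} and C_{w≥0} ⊥ C_{t≤-1}. Then C_{w≥0} = C_{t≥0}. -/

import Mathlib

open CategoryTheory CategoryTheory.Limits CategoryTheory.Pretriangulated ZeroObject

universe w' v u

variable (C : Type u) [Category.{v} C] [HasZeroObject C] [HasShift C ℤ]
  [Preadditive C] [∀ n : ℤ, (shiftFunctor C n).Additive] [Pretriangulated C]

/-- A t-structure `t = (C_{t≤0}, C_{t≥0})` on a triangulated category, in the homological
convention of the paper.  `le` is the class `C_{t≤0}` and `ge` is the class `C_{t≥0}`.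
The condition `C_{t≤0} ⊆ C_{t≤0}[1]` is encoded as `le X → le (X⟦-1⟧)` (the classes being
closed under isomorphism), and `C_{t≥0}[1] ⊆ C_{t≥0}` as `ge X → ge (X⟦1⟧)`.
The class `C_{t≤i} = C_{t≤0}[i]` is `fun X => le (X⟦-i⟧)` and similarly for `C_{t≥i}`. -/
structure PaperTStructure where
  /-- the class `C_{t≤0}` -/
  le : C → Prop
  /-- the class `C_{t≥0}` -/
  ge : C → Prop
  le_iso : ∀ {X Y : C}, (X ≅ Y) → le X → le Y
  ge_iso : ∀ {X Y : C}, (X ≅ Y) → ge X → ge Y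
  le_shift : ∀ X : C, le X → le (X⟦(-1 : ℤ)⟧)
  ge_shift : ∀ X : C, ge X → ge (X⟦(1 : ℤ)⟧)
  /-- `C_{t≥0}[1] ⊥ C_{t≤0}` -/
  orth : ∀ (X Y : C), ge X → le Y → ∀ f : X⟦(1 : ℤ)⟧ ⟶ Y, f = 0
  /-- every object `M` admits a `t`-decomposition `L → M → R → L[1]` with `L ∈ C_{t≥0}`,
  `R ∈ C_{t≤0}[-1]` (i.e. `R⟦1⟧ ∈ C_{t≤0}`) -/
  decomp : ∀ M : C, ∃ (L R : C) (f : L ⟶ M) (g : M ⟶ R) (h : R ⟶ L⟦(1 : ℤ)⟧),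
    (Triangle.mk f g h ∈ distTriang C) ∧ ge L ∧ le (R⟦(1 : ℤ)⟧)

/-- A weight structure `w = (C_{w≤0}, C_{w≥0})` on a triangulated category, in the homological
convention of the paper.  `le` is the class `C_{w≤0}` and `ge` is the class `C_{w≥0}`;
both are retraction-closed.  `C_{w≤i} = C_{w≤0}[i]` is `fun X => le (X⟦-i⟧)`, similarly `ge`. -/
structure PaperWeightStructure where
  /-- the class `C_{w≤0}` -/
  le : C → Prop
  /-- the class `C_{w≥0}` -/
  ge : C → Prop
  le_retract : ∀ (X Y : C), le Y → (∃ (i : X ⟶ Y) (r : Y ⟶ X), i ≫ r = 𝟙 X) → le X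
  ge_retract : ∀ (X Y : C), ge Y → (∃ (i : X ⟶ Y) (r : Y ⟶ X), i ≫ r = 𝟙 X) → ge X
  le_shift : ∀ X : C, le X → le (X⟦(-1 : ℤ)⟧)
  ge_shift : ∀ X : C, ge X → ge (X⟦(1 : ℤ)⟧)
  /-- `C_{w≤0} ⊥ C_{w≥0}[1]` -/
  orth : ∀ (X Y : C), le X → ge Y → ∀ f : X ⟶ Y⟦(1 : ℤ)⟧, f = 0
  /-- every object `M` admits a weight decomposition `L → M → R → L[1]` with `L ∈ C_{w≤0}`,
  `R ∈ C_{w≥0}[1]` (i.e. `R⟦-1⟧ ∈ C_{w≥0}`) -/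
  decomp : ∀ M : C, ∃ (L R : C) (f : L ⟶ M) (g : M ⟶ R) (h : R ⟶ L⟦(1 : ℤ)⟧),
    (Triangle.mk f g h ∈ distTriang C) ∧ le L ∧ ge (R⟦(-1 : ℤ)⟧)

/-- A class of objects is extension-closed if it contains `0` and for every distinguished
triangle `X → Y → Z → X[1]` with `X, Z` in the class, `Y` lies in the class. -/
def ExtClosed (P : C → Prop) : Prop :=
  P (0 : C) ∧ ∀ T : Triangle C, (T ∈ distTriang C) → P T.obj₁ → P T.obj₃ → P T.obj₂

/-- A class of objects is retraction-closed if it contains all retracts of its elements. -/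
def RetractClosed (P : C → Prop) : Prop :=
  ∀ X Y : C, P Y → (∃ (i : X ⟶ Y) (r : Y ⟶ X), i ≫ r = 𝟙 X) → P X

/-- if a weight structure `w` and a t-structure `t` on `C` are left adjacent,
i.e. `C_{w≤0} ⊥ C_{t≥1}` and `C_{w≥0} ⊥ C_{t≤-1}`, then `C_{w≥0} = C_{t≥0}`.
Here `C_{t≥1} = {Y : Y⟦-1⟧ ∈ C_{t≥0}}` and `C_{t≤-1} = {Y : Y⟦1⟧ ∈ C_{t≤0}}`. -/
theorem stmt11 (w : PaperWeightStructure C) (t : PaperTStructure C)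
    (h1 : ∀ X Y : C, w.le X → t.ge (Y⟦(-1 : ℤ)⟧) → ∀ f : X ⟶ Y, f = 0)
    (h2 : ∀ X Y : C, w.ge X → t.le (Y⟦(1 : ℤ)⟧) → ∀ f : X ⟶ Y, f = 0) :
    ∀ X : C, w.ge X ↔ t.ge X := by
  intro X
  constructor
  · -- w.ge X → t.ge X
    intro hX
    obtain ⟨L, R, f, g, h, hT, hL, hR⟩ := t.decomp X
    have hg : g = 0 := h2 X R hX hR g
    obtain ⟨r, hr⟩ := Triangle.yoneda_exact₃ _ hT (𝟙 R) (by simp [hg]; exact zero_comp)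
    have hr1 : (shiftFunctor C (1 : ℤ)).map r = 0 :=
      t.orth (L⟦(1 : ℤ)⟧) (R⟦(1 : ℤ)⟧) (t.ge_shift L hL) hR _
    have hr0 : r = 0 := (shiftFunctor C (1 : ℤ)).map_injective (by simpa using hr1)
    have hRzero : IsZero R := by
      rw [IsZero.iff_id_eq_zero, hr, hr0, comp_zero]
      rfl
    have : IsIso f := (Triangle.isZero₃_iff_isIso₁ _ hT).1 hRzero
    exact t.ge_iso (asIso f) hL
  · -- t.ge X → w.ge X
    intro hX
    obtain ⟨L, R, f, g, h, hT, hL, hR⟩ := w.decomp (X⟦(1 : ℤ)⟧)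
    have e : (X⟦(1 : ℤ)⟧)⟦(-1 : ℤ)⟧ ≅ X :=
      (shiftFunctorCompIsoId C (1 : ℤ) (-1 : ℤ) (by ring)).app X
    have hf : f = 0 := h1 L (X⟦(1 : ℤ)⟧) hL (t.ge_iso e.symm hX) f
    obtain ⟨r, hr⟩ : ∃ r : R ⟶ X⟦(1 : ℤ)⟧, 𝟙 _ = g ≫ r := Triangle.yoneda_exact₂ _ hT (𝟙 (X⟦(1 : ℤ)⟧)) (by simp [hf]; exact zero_comp)
    refine w.ge_retract X (R⟦(-1 : ℤ)⟧) hR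
      ⟨e.inv ≫ (shiftFunctor C (-1 : ℤ)).map g, (shiftFunctor C (-1 : ℤ)).map r ≫ e.hom, ?_⟩
    rw [Category.assoc, ← Category.assoc ((shiftFunctor C (-1 : ℤ)).map g),
      ← Functor.map_comp, ← hr]
    simp
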